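/- For a triangular array of integrable ℝ^d-valued adapted random vectors, condition (M₁^d): E(max_{1≤k≤k_n} ‖X_{nk}‖) → 0 implies the conditional L₁-Lindeberg condition (CLB₁^d): for every ε > 0, ∑_{k=1}^{k_n} E(‖X_{nk}‖ 1_{{‖X_{nk}‖ ≥ ε}} | F_{n,k-1}) → 0 in probability as n → ∞. -/

import Mathlib

open MeasureTheory Filter

lemma aux_stop (Y : ℕ → ℝ) (c b : ℝ) (hc : 0 ≤ c) (hb : 0 ≤ b) :
    ∀ n, (∀ k, 0 ≤ Y k) → (∀ k, 1 ≤ k → k ≤ n → Y k ≤ b) →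
    ∑ k ∈ Finset.Icc 1 n, (if (∑ j ∈ Finset.Icc 1 (k-1), Y j) < c then Y k else 0)
      ≤ min (∑ j ∈ Finset.Icc 1 n, Y j) (c + b) := by
  intro n
  induction n with
  | zero => intro _ _; simp [le_min_iff, add_nonneg hc hb]
  | succ n ih =>
    intro h0 hbnd
    have ih' := ih h0 (fun k h1 h2 => hbnd k h1 (h2.trans n.le_succ))
    rw [Finset.sum_Icc_succ_top (Nat.one_le_iff_ne_zero.mpr (Nat.succ_ne_zero n)),
        Finset.sum_Icc_succ_top (Nat.one_le_iff_ne_zero.mpr (Nat.succ_ne_zero n))]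
    simp only [Nat.add_sub_cancel]
    by_cases h : (∑ j ∈ Finset.Icc 1 n, Y j) < c
    · rw [if_pos h]
      have hA : min (∑ j ∈ Finset.Icc 1 n, Y j) (c + b) = ∑ j ∈ Finset.Icc 1 n, Y j :=
        min_eq_left (le_of_lt (h.trans_le (le_add_of_nonneg_right hb)))
      rw [hA] at ih'
      have hYb : Y (n+1) ≤ b := hbnd (n+1) (Nat.succ_le_succ (Nat.zero_le n)) le_rfl
      refine le_min (add_le_add ih' le_rfl) ?_
      have : (∑ j ∈ Finset.Icc 1 n, Y j) + Y (n+1) ≤ c + b :=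
        le_of_lt (add_lt_add_of_lt_of_le h hYb)
      linarith
    · rw [if_neg h, add_zero]
      refine ih'.trans (min_le_min (le_add_of_nonneg_right (h0 (n+1))) le_rfl)

theorem stmt3 {Ω : Type*} {m0 : MeasurableSpace Ω} (μ : Measure Ω) [IsProbabilityMeasure μ]
    {d : ℕ} (kn : ℕ → ℕ) (hkn : ∀ n, 1 ≤ kn n)
    (𝓕 : ℕ → ℕ → MeasurableSpace Ω)
    (hFmono : ∀ n, Monotone (𝓕 n)) (hFle : ∀ n k, 𝓕 n k ≤ m0)
    (X : ℕ → ℕ → Ω → EuclideanSpace ℝ (Fin d))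
    (hadapted : ∀ n k, StronglyMeasurable[𝓕 n k] (X n k))
    (hL2 : ∀ n k, Integrable (X n k) μ)
    (hM2 : Tendsto
      (fun n => ∫ ω, (Finset.Icc 1 (kn n)).sup'
        (Finset.nonempty_Icc.mpr (hkn n)) (fun k => ‖X n k ω‖) ∂μ)
      atTop (nhds 0)) :
    ∀ ε > (0 : ℝ), TendstoInMeasure μ
      (fun n ω => ∑ k ∈ Finset.Icc 1 (kn n),
        (μ[Set.indicator {ω'' | ε ≤ ‖X n k ω''‖} (fun ω'' => ‖X n k ω''‖) | 𝓕 n (k - 1)]) ω)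
      atTop (fun _ => 0) := by
  classical
  intro ε hε
  rw [tendstoInMeasure_iff_norm]
  simp_rw [← dist_eq_norm]
  intro δ hδ
  -- basic objects
  set M : ℕ → Ω → ℝ := fun n ω => (Finset.Icc 1 (kn n)).sup'
      (Finset.nonempty_Icc.mpr (hkn n)) (fun k => ‖X n k ω‖) with hMdef
  set Y : ℕ → ℕ → Ω → ℝ := fun n k =>
      Set.indicator {ω'' | ε ≤ ‖X n k ω''‖} (fun ω'' => ‖X n k ω''‖) with hYdef
  set Z : ℕ → ℕ → Ω → ℝ := fun n k => μ[Y n k | 𝓕 n (k-1)] with hZdef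
  set S : ℕ → Ω → ℝ := fun n ω => ∑ k ∈ Finset.Icc 1 (kn n), Z n k ω with hSdef
  -- measurability / integrability of Y
  have hsetF : ∀ n k, MeasurableSet[𝓕 n k] {ω'' | ε ≤ ‖X n k ω''‖} := by
    intro n k
    have hnm : Measurable[𝓕 n k] (fun ω => ‖X n k ω‖) := measurable_norm.comp (hadapted n k).measurable
    have h : {ω'' | ε ≤ ‖X n k ω''‖} = (fun ω => ‖X n k ω‖) ⁻¹' Set.Ici ε := rfl
    rw [h]
    exact hnm measurableSet_Ici
  have hYsm : ∀ n k, StronglyMeasurable[𝓕 n k] (Y n k) := fun n k =>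
    (hadapted n k).norm.indicator (hsetF n k)
  have hYnn : ∀ n k ω, 0 ≤ Y n k ω := fun n k ω =>
    Set.indicator_nonneg (fun ω' _ => norm_nonneg _) ω
  have hYleX : ∀ n k ω, Y n k ω ≤ ‖X n k ω‖ := fun n k ω =>
    Set.indicator_le_self' (fun ω' _ => norm_nonneg _) ω
  have hYint : ∀ n k, Integrable (Y n k) μ := fun n k =>
    (hL2 n k).norm.indicator (hFle n k _ (hsetF n k))
  -- measurability / integrability of M
  have hMm : ∀ n, Measurable (M n) := by
    intro n
    have h1 : Measurable ((Finset.Icc 1 (kn n)).sup' (Finset.nonempty_Icc.mpr (hkn n))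
        (fun k ω => ‖X n k ω‖)) :=
      Finset.measurable_sup' _ (fun k _ => ((hadapted n k).mono (hFle n k)).measurable.norm)
    have h3 : (fun ω => (Finset.Icc 1 (kn n)).sup' (Finset.nonempty_Icc.mpr (hkn n))
          (fun k => ‖X n k ω‖))
        = (Finset.Icc 1 (kn n)).sup' (Finset.nonempty_Icc.mpr (hkn n))
          (fun k (ω : Ω) => ‖X n k ω‖) := by
      funext ω
      exact (Finset.sup'_apply (Finset.nonempty_Icc.mpr (hkn n))
        (fun k (ω : Ω) => ‖X n k ω‖) ω).symm
    have h2 : Measurable (fun ω => (Finset.Icc 1 (kn n)).sup'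
        (Finset.nonempty_Icc.mpr (hkn n)) (fun k => ‖X n k ω‖)) := by rw [h3]; exact h1
    exact h2
  have hMnn : ∀ n ω, 0 ≤ M n ω := fun n ω =>
    (norm_nonneg _).trans (Finset.le_sup' (fun k => ‖X n k ω‖)
      (Finset.mem_Icc.mpr ⟨le_rfl, hkn n⟩))
  have hXleM : ∀ n k, k ∈ Finset.Icc 1 (kn n) → ∀ ω, ‖X n k ω‖ ≤ M n ω := fun n k hk ω =>
    Finset.le_sup' (fun k => ‖X n k ω‖) hk
  have hMint : ∀ n, Integrable (M n) μ := by
    intro n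
    refine Integrable.mono' (integrable_finset_sum (Finset.Icc 1 (kn n))
      (fun k _ => (hL2 n k).norm)) (hMm n).aestronglyMeasurable
      (ae_of_all _ (fun ω => ?_))
    rw [Real.norm_of_nonneg (hMnn n ω)]
    exact Finset.sup'_le _ _ (fun k hk =>
      Finset.single_le_sum (f := fun j => ‖X n j ω‖) (fun j _ => norm_nonneg _) hk)
  -- the stopped objects
  set A : ℕ → ℕ → Ω → ℝ := fun n j ω => ∑ k ∈ Finset.Icc 1 j, Y n k ω with hAdef
  set B : ℕ → ℕ → Set Ω := fun n k => {ω | A n (k-1) ω < 1} with hBdef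
  have hBmeas : ∀ n k, MeasurableSet[𝓕 n (k-1)] (B n k) := by
    intro n k
    have hA : Measurable[𝓕 n (k-1)] (A n (k-1)) := by
      apply Finset.measurable_sum
      intro j hj
      have hj' : j ≤ k - 1 := (Finset.mem_Icc.mp hj).2
      exact ((hYsm n j).mono (hFmono n hj')).measurable
    exact measurableSet_lt hA measurable_const
  have hZint : ∀ n k, Integrable (Z n k) μ := fun n k => integrable_condExp
  have hZnn : ∀ n k, 0 ≤ᵐ[μ] Z n k := fun n k =>
    condExp_nonneg (ae_of_all _ (hYnn n k))
  set T : ℕ → Ω → ℝ := fun n ω =>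
    ∑ k ∈ Finset.Icc 1 (kn n), (B n k).indicator (Z n k) ω with hTdef
  have hTint : ∀ n, Integrable (T n) μ := fun n =>
    integrable_finset_sum _ (fun k _ => (hZint n k).indicator (hFle n (k-1) _ (hBmeas n k)))
  have hTnn : ∀ n, 0 ≤ᵐ[μ] T n := by
    intro n
    have h : ∀ᵐ ω ∂μ, ∀ k, 0 ≤ Z n k ω := ae_all_iff.mpr (fun k => hZnn n k)
    filter_upwards [h] with ω hω
    exact Finset.sum_nonneg (fun k _ => Set.indicator_nonneg (fun x _ => hω k) ω)
  have hSnn : ∀ n, 0 ≤ᵐ[μ] S n := by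
    intro n
    have h : ∀ᵐ ω ∂μ, ∀ k, 0 ≤ Z n k ω := ae_all_iff.mpr (fun k => hZnn n k)
    filter_upwards [h] with ω hω
    exact Finset.sum_nonneg (fun k _ => hω k)
  set In : ℕ → ℝ := fun n => ∫ ω, M n ω ∂μ with hIndef
  have hInn : ∀ n, 0 ≤ In n := fun n => integral_nonneg (hMnn n)
  -- Markov for M
  have hMark1 : ∀ n, (μ {ω | ε ≤ M n ω}).toReal ≤ In n / ε := by
    intro n
    have := mul_meas_ge_le_integral_of_nonneg (ae_of_all μ (hMnn n)) (hMint n) ε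
    rw [le_div_iff₀ hε]
    rw [measureReal_def] at this
    linarith
  -- integral of T
  have hET : ∀ n, ∫ ω, T n ω ∂μ ≤ In n / ε + In n := by
    intro n
    have step1 : ∫ ω, T n ω ∂μ
        = ∑ k ∈ Finset.Icc 1 (kn n), ∫ ω, (B n k).indicator (Y n k) ω ∂μ := by
      rw [hTdef]
      rw [integral_finset_sum _ (fun k _ => (hZint n k).indicator (hFle n (k-1) _ (hBmeas n k)))]
      refine Finset.sum_congr rfl (fun k _ => ?_)
      rw [integral_indicator (hFle n (k-1) _ (hBmeas n k)),
          integral_indicator (hFle n (k-1) _ (hBmeas n k))]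
      exact setIntegral_condExp (hFle n (k-1)) (hYint n k) (hBmeas n k)
    have step2 : ∑ k ∈ Finset.Icc 1 (kn n), ∫ ω, (B n k).indicator (Y n k) ω ∂μ
        = ∫ ω, ∑ k ∈ Finset.Icc 1 (kn n), (B n k).indicator (Y n k) ω ∂μ := by
      rw [integral_finset_sum _ (fun k _ => (hYint n k).indicator (hFle n (k-1) _ (hBmeas n k)))]
    have hMset : MeasurableSet {ω | ε ≤ M n ω} := measurableSet_le measurable_const (hMm n)
    have step3 : ∫ ω, ∑ k ∈ Finset.Icc 1 (kn n), (B n k).indicator (Y n k) ω ∂μ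
        ≤ ∫ ω, (Set.indicator {ω' | ε ≤ M n ω'} (fun _ => (1:ℝ)) ω + M n ω) ∂μ := by
      refine integral_mono
        (integrable_finset_sum _ (fun k _ => (hYint n k).indicator (hFle n (k-1) _ (hBmeas n k))))
        (((integrable_const (1:ℝ)).indicator hMset).add (hMint n)) (fun ω => ?_)
      have key : ∑ k ∈ Finset.Icc 1 (kn n), (B n k).indicator (Y n k) ω
          ≤ min (∑ j ∈ Finset.Icc 1 (kn n), Y n j ω) (1 + M n ω) := by
        have := aux_stop (fun k => Y n k ω) 1 (M n ω) zero_le_one (hMnn n ω) (kn n)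
          (fun k => hYnn n k ω)
          (fun k h1 h2 => (hYleX n k ω).trans (hXleM n k (Finset.mem_Icc.mpr ⟨h1, h2⟩) ω))
        refine le_trans (le_of_eq ?_) this
        refine Finset.sum_congr rfl (fun k _ => ?_)
        rw [Set.indicator_apply]
        rfl
      refine key.trans ?_
      simp only [Set.indicator_apply, Set.mem_setOf_eq]
      by_cases hεM : ε ≤ M n ω
      · rw [if_pos hεM]
        exact min_le_right _ _
      · rw [if_neg hεM, zero_add]
        have hA0 : (∑ j ∈ Finset.Icc 1 (kn n), Y n j ω) = 0 := by
          refine Finset.sum_eq_zero (fun j hj => ?_)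
          have hnot : ¬ ε ≤ ‖X n j ω‖ := fun hc => hεM (hc.trans (hXleM n j hj ω))
          simp only [hYdef, Set.indicator_apply, Set.mem_setOf_eq]
          rw [if_neg hnot]
        exact le_trans (le_trans (min_le_left _ _) (le_of_eq hA0)) (hMnn n ω)
    have step4 : ∫ ω, (Set.indicator {ω' | ε ≤ M n ω'} (fun _ => (1:ℝ)) ω + M n ω) ∂μ
        = (μ {ω | ε ≤ M n ω}).toReal + In n := by
      rw [integral_add ((integrable_const (1:ℝ)).indicator hMset) (hMint n),
          integral_indicator_const (1:ℝ) hMset]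
      simp [hIndef]
      rfl
    calc ∫ ω, T n ω ∂μ
        ≤ (μ {ω | ε ≤ M n ω}).toReal + In n := by rw [step1, step2]; rw [step4] at step3; exact step3
      _ ≤ In n / ε + In n := add_le_add (hMark1 n) le_rfl
  -- Markov for T
  have hMark2 : ∀ n, (μ {ω | δ ≤ T n ω}).toReal ≤ (In n / ε + In n) / δ := by
    intro n
    have h1 := mul_meas_ge_le_integral_of_nonneg (hTnn n) (hTint n) δ
    rw [le_div_iff₀ hδ]
    rw [measureReal_def] at h1
    have := (hET n)
    linarith
  -- the set inclusion
  have hsub : ∀ n, {x | δ ≤ dist (S n x) 0}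
      ⊆ ({ω | ε ≤ M n ω} ∪ {ω | δ ≤ T n ω}) ∪ {ω | ¬ 0 ≤ S n ω} := by
    intro n ω hω
    by_cases h0 : 0 ≤ S n ω
    · left
      by_cases hεM : ε ≤ M n ω
      · exact Or.inl hεM
      · right
        have hdist : dist (S n ω) 0 = S n ω := by
          rw [Real.dist_eq, sub_zero, abs_of_nonneg h0]
        rw [Set.mem_setOf_eq, hdist] at hω
        have hTS : T n ω = S n ω := by
          refine Finset.sum_congr rfl (fun k hk => ?_)
          have hmem : ω ∈ B n k := by
            have hA0 : A n (k-1) ω = 0 := by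
              refine Finset.sum_eq_zero (fun j hj => ?_)
              have hj1 : 1 ≤ j := (Finset.mem_Icc.mp hj).1
              have hj2 : j ≤ kn n := le_trans (Finset.mem_Icc.mp hj).2
                (le_trans (Nat.sub_le _ _) (Finset.mem_Icc.mp hk).2)
              have hnot : ¬ ε ≤ ‖X n j ω‖ := fun hc =>
                hεM (hc.trans (hXleM n j (Finset.mem_Icc.mpr ⟨hj1, hj2⟩) ω))
              simp only [hYdef, Set.indicator_apply, Set.mem_setOf_eq]
              rw [if_neg hnot]
            simp only [hBdef, Set.mem_setOf_eq, hA0]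
            exact zero_lt_one
          exact Set.indicator_of_mem hmem _
        show δ ≤ T n ω
        rw [hTS]; exact hω
    · exact Or.inr h0
  have hμS0 : ∀ n, μ {ω | ¬ 0 ≤ S n ω} = 0 := by
    intro n
    have h := ae_iff.mp (hSnn n)
    simpa using h
  -- measure bound
  have hbound : ∀ n, (μ {x | δ ≤ dist (S n x) 0}).toReal ≤ In n / ε + (In n / ε + In n) / δ := by
    intro n
    have hle : μ {x | δ ≤ dist (S n x) 0} ≤ μ {ω | ε ≤ M n ω} + μ {ω | δ ≤ T n ω} := by
      calc μ {x | δ ≤ dist (S n x) 0}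
          ≤ μ (({ω | ε ≤ M n ω} ∪ {ω | δ ≤ T n ω}) ∪ {ω | ¬ 0 ≤ S n ω}) :=
            measure_mono (hsub n)
        _ ≤ μ ({ω | ε ≤ M n ω} ∪ {ω | δ ≤ T n ω}) + μ {ω | ¬ 0 ≤ S n ω} :=
            measure_union_le _ _
        _ = μ ({ω | ε ≤ M n ω} ∪ {ω | δ ≤ T n ω}) := by rw [hμS0 n, add_zero]
        _ ≤ μ {ω | ε ≤ M n ω} + μ {ω | δ ≤ T n ω} := measure_union_le _ _
    calc (μ {x | δ ≤ dist (S n x) 0}).toReal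
        ≤ (μ {ω | ε ≤ M n ω} + μ {ω | δ ≤ T n ω}).toReal :=
          ENNReal.toReal_mono
            (ENNReal.add_ne_top.mpr ⟨measure_ne_top μ _, measure_ne_top μ _⟩) hle
      _ = (μ {ω | ε ≤ M n ω}).toReal + (μ {ω | δ ≤ T n ω}).toReal :=
          ENNReal.toReal_add (measure_ne_top μ _) (measure_ne_top μ _)
      _ ≤ In n / ε + (In n / ε + In n) / δ := add_le_add (hMark1 n) (hMark2 n)
  -- conclude
  have hIn0 : Tendsto In atTop (nhds 0) := hM2
  have hlim : Tendsto (fun n => In n / ε + (In n / ε + In n) / δ) atTop (nhds 0) := by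
    have := (hIn0.div_const ε).add (((hIn0.div_const ε).add hIn0).div_const δ)
    simpa using this
  have htoReal : Tendsto (fun n => (μ {x | δ ≤ dist (S n x) 0}).toReal) atTop (nhds 0) :=
    squeeze_zero (fun n => ENNReal.toReal_nonneg) hbound hlim
  have hfinal : Tendsto (fun n => μ {x | δ ≤ dist (S n x) 0}) atTop (nhds 0) := by
    have h1 := ENNReal.tendsto_ofReal htoReal
    rw [ENNReal.ofReal_zero] at h1
    exact h1.congr (fun n => ENNReal.ofReal_toReal (measure_ne_top μ _))
  exact hfinal
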